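/- Fix reals s, m, f with f > 0 and s > m f > 0. If u : [0,1]×[0,∞) → ℝ is a C¹ function satisfying ∂ₜu(x,t) + s x(1−x) ∂ₓu(x,t) = m f [u(1,t) − u(x,t)] for all x ∈ [0,1], t > 0, with u(x,0) = x, then u(x,t) = Z(x,t) := 1 − (1−x) e^{(s−mf)t}/(1 + (1−x)(e^{st} − 1)) for all x ∈ [0,1] and t ≥ 0; i.e., Z is the only solution with initial datum x. -/

import Mathlib

open Set Filter Topology

/-- A `C¹` function on `ℝ` whose derivative vanishes on `(0,∞)` is constant on `[0,∞)`. -/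
lemma stmt14_const_aux (w : ℝ → ℝ) (hw : ContDiff ℝ 1 w)
    (hd : ∀ t > (0:ℝ), deriv w t = 0) : ∀ t ≥ (0:ℝ), w t = w 0 := by
  have hcd : Continuous (deriv w) := hw.continuous_deriv le_rfl
  have hderiv0 : deriv w 0 = 0 := by
    have h1 : Tendsto (deriv w) (𝓝[>] (0:ℝ)) (𝓝 (deriv w 0)) :=
      (hcd.continuousAt).continuousWithinAt.tendsto
    have h2 : Tendsto (deriv w) (𝓝[>] (0:ℝ)) (𝓝 0) := by
      apply Tendsto.congr' _ tendsto_const_nhds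
      filter_upwards [self_mem_nhdsWithin] with τ hτ
      exact (hd τ hτ).symm
    exact tendsto_nhds_unique h1 h2
  intro t ht
  rcases eq_or_lt_of_le ht with h | h
  · rw [← h]
  · have hder : ∀ τ ∈ Ico (0:ℝ) t, HasDerivWithinAt w 0 (Ici τ) τ := by
      intro τ hτ
      have hdiff : HasDerivAt w (deriv w τ) τ :=
        ((hw.differentiable one_ne_zero) τ).hasDerivAt
      have hz : deriv w τ = 0 := by
        rcases eq_or_lt_of_le hτ.1 with h0 | h0
        · rw [← h0]; exact hderiv0
        · exact hd τ h0
      exact (hz ▸ hdiff).hasDerivWithinAt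
    exact constant_of_has_deriv_right_zero (hw.continuous.continuousOn) hder t
      ⟨le_of_lt h, le_rfl⟩

theorem stmt_14 (s m f : ℝ) (hf : 0 < f) (hmf : 0 < m * f) (hs : m * f < s)
    (u : ℝ → ℝ → ℝ)
    (hu_c1 : ContDiff ℝ 1 (Function.uncurry u))
    (hu_pde : ∀ x ∈ Set.Icc (0:ℝ) 1, ∀ t > (0:ℝ),
      deriv (fun τ => u x τ) t + s * x * (1 - x) * deriv (fun y => u y t) x
        = m * f * (u 1 t - u x t))
    (hu_init : ∀ x ∈ Set.Icc (0:ℝ) 1, u x 0 = x) :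
    ∀ x ∈ Set.Icc (0:ℝ) 1, ∀ t ≥ (0:ℝ),
      u x t = 1 - (1 - x) * Real.exp ((s - m * f) * t)
        / (1 + (1 - x) * (Real.exp (s * t) - 1)) := by
  set F := Function.uncurry u with hFdef
  have hFd : Differentiable ℝ F := hu_c1.differentiable one_ne_zero
  -- partial derivative in t
  have hDt : ∀ X t : ℝ, HasDerivAt (fun τ => u X τ) ((fderiv ℝ F (X, t)) (0, 1)) t := by
    intro X t
    have h1 : HasDerivAt (fun τ : ℝ => (X, τ)) ((0:ℝ), (1:ℝ)) t :=
      (hasDerivAt_const t X).prodMk (hasDerivAt_id t)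
    exact (hFd (X, t)).hasFDerivAt.comp_hasDerivAt t h1
  -- partial derivative in x
  have hDx : ∀ X t : ℝ, HasDerivAt (fun y => u y t) ((fderiv ℝ F (X, t)) (1, 0)) X := by
    intro X t
    have h1 : HasDerivAt (fun y : ℝ => (y, t)) ((1:ℝ), (0:ℝ)) X :=
      (hasDerivAt_id X).prodMk (hasDerivAt_const X t)
    exact (hFd (X, t)).hasFDerivAt.comp_hasDerivAt X h1
  -- step 1 : u 1 t = 1 for t ≥ 0
  have hone : ∀ t ≥ (0:ℝ), u 1 t = 1 := by
    have hv : ContDiff ℝ 1 (fun t : ℝ => u 1 t) := by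
      have : (fun t : ℝ => u 1 t) = F ∘ (fun t : ℝ => ((1:ℝ), t)) := rfl
      rw [this]
      exact hu_c1.comp (contDiff_const.prodMk contDiff_id)
    have hdv : ∀ t > (0:ℝ), deriv (fun τ => u 1 τ) t = 0 := by
      intro t ht
      have := hu_pde 1 (by norm_num) t ht
      simp only [sub_self, mul_zero] at this
      linarith [this]
    have hcst := stmt14_const_aux (fun t => u 1 t) hv hdv
    intro t ht
    have h2 := hcst t ht
    rw [h2]
    exact hu_init 1 (by norm_num)
  intro x hx t ht
  rcases eq_or_lt_of_le ht with h0 | hT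
  · rw [← h0]
    rw [hu_init x hx]
    simp
  -- characteristic through (x, t)
  set T := t with hTdef
  obtain ⟨hx0, hx1⟩ := hx
  set E : ℝ → ℝ := fun τ => Real.exp (s * (τ - T)) with hEdef
  have hEpos : ∀ τ, 0 < E τ := fun τ => Real.exp_pos _
  set D : ℝ → ℝ := fun τ => 1 - x + x * E τ with hDdef
  have hDpos : ∀ τ, 0 < D τ := by
    intro τ
    rcases eq_or_lt_of_le hx0 with h | h
    · simp only [hDdef, ← h]; norm_num
    · have : 0 < x * E τ := mul_pos h (hEpos τ)
      have : 0 ≤ 1 - x := by linarith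
      simp only [hDdef]
      nlinarith [hEpos τ, mul_pos h (hEpos τ)]
  set φ : ℝ → ℝ := fun τ => x * E τ / D τ with hφdef
  have hφmem : ∀ τ, φ τ ∈ Set.Icc (0:ℝ) 1 := by
    intro τ
    constructor
    · exact div_nonneg (mul_nonneg hx0 (hEpos τ).le) (hDpos τ).le
    · rw [div_le_one (hDpos τ)]
      simp only [hDdef]
      nlinarith
  have hφT : φ T = x := by
    simp only [hφdef, hEdef, hDdef, sub_self, mul_zero, Real.exp_zero, mul_one]
    field_simp
    ring
  -- derivative of E
  have hEderiv : ∀ τ, HasDerivAt E (s * E τ) τ := by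
    intro τ
    have h1 : HasDerivAt (fun τ : ℝ => s * (τ - T)) s τ := by
      simpa using ((hasDerivAt_id τ).sub_const T).const_mul s
    convert h1.exp using 1
    exact mul_comm _ _
  have hDderiv : ∀ τ, HasDerivAt D (x * (s * E τ)) τ := by
    intro τ
    simpa [hDdef] using (((hEderiv τ).const_mul x).const_add (1 - x))
  have hφderiv : ∀ τ, HasDerivAt φ (s * φ τ * (1 - φ τ)) τ := by
    intro τ
    have h1 : HasDerivAt φ
        ((x * (s * E τ) * D τ - x * E τ * (x * (s * E τ))) / (D τ)^2) τ :=
      ((hEderiv τ).const_mul x).div (hDderiv τ) (hDpos τ).ne'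
    convert h1 using 1
    have hD : 1 - x + x * E τ ≠ 0 := (hDpos τ).ne'
    simp only [hφdef, hDdef]
    field_simp
  have hφcd : ContDiff ℝ 1 φ := by
    have hE : ContDiff ℝ 1 E := by
      exact Real.contDiff_exp.comp ((contDiff_id.sub contDiff_const).const_smul s)
    exact (contDiff_const.mul hE).div (contDiff_const.add (contDiff_const.mul hE))
      (fun τ => (hDpos τ).ne')
  -- g and its ODE
  set g : ℝ → ℝ := fun τ => u (φ τ) τ with hgdef
  have hgcd : ContDiff ℝ 1 g := by
    have : g = F ∘ (fun τ : ℝ => (φ τ, τ)) := rfl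
    rw [this]
    exact hu_c1.comp (hφcd.prodMk contDiff_id)
  have hgderiv : ∀ τ > (0:ℝ), HasDerivAt g (m * f * (1 - g τ)) τ := by
    intro τ hτ
    have hcurve : HasDerivAt (fun τ : ℝ => (φ τ, τ)) ((s * φ τ * (1 - φ τ), (1:ℝ))) τ :=
      (hφderiv τ).prodMk (hasDerivAt_id τ)
    have hg1 := (hFd (φ τ, τ)).hasFDerivAt.comp_hasDerivAt_of_eq τ hcurve rfl
    have hsplit : ((s * φ τ * (1 - φ τ), (1:ℝ)) : ℝ × ℝ)
        = (s * φ τ * (1 - φ τ)) • ((1:ℝ), (0:ℝ)) + ((0:ℝ), (1:ℝ)) := by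
      simp [Prod.ext_iff]
    rw [hsplit, map_add, map_smul, smul_eq_mul] at hg1
    have hpde := hu_pde (φ τ) (hφmem τ) τ hτ
    rw [(hDt (φ τ) τ).deriv, (hDx (φ τ) τ).deriv] at hpde
    have hu1 : u 1 τ = 1 := hone τ hτ.le
    rw [hu1] at hpde
    have hg2 : HasDerivAt g (s * φ τ * (1 - φ τ) * (fderiv ℝ F (φ τ, τ)) (1, 0)
        + (fderiv ℝ F (φ τ, τ)) (0, 1)) τ := hg1
    convert hg2 using 1
    show m * f * (1 - u (φ τ) τ) = _
    linarith [hpde]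
  -- h := (g - 1) * exp(mf τ) is constant
  set h : ℝ → ℝ := fun τ => (g τ - 1) * Real.exp (m * f * τ) with hhdef
  have hhcd : ContDiff ℝ 1 h := by
    exact (hgcd.sub contDiff_const).mul
      (Real.contDiff_exp.comp (contDiff_const.mul contDiff_id))
  have hhd : ∀ τ > (0:ℝ), deriv h τ = 0 := by
    intro τ hτ
    have hexp : HasDerivAt (fun τ : ℝ => Real.exp (m * f * τ))
        (Real.exp (m * f * τ) * (m * f)) τ := by
      have h1 : HasDerivAt (fun τ : ℝ => m * f * τ) (m * f) τ := by
        simpa using (hasDerivAt_id τ).const_mul (m * f)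
      exact h1.exp
    have hh1 : HasDerivAt h
        (m * f * (1 - g τ) * Real.exp (m * f * τ)
          + (g τ - 1) * (Real.exp (m * f * τ) * (m * f))) τ :=
      (((hgderiv τ hτ).sub_const 1).mul hexp)
    have : HasDerivAt h 0 τ := by
      convert hh1 using 1
      ring
    exact this.deriv
  have hconst := stmt14_const_aux h hhcd hhd T hT.le
  -- unpack
  have hφ0 : φ 0 ∈ Set.Icc (0:ℝ) 1 := hφmem 0
  have hh0 : h 0 = φ 0 - 1 := by
    simp only [hhdef, hgdef, mul_zero, Real.exp_zero, mul_one]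
    rw [hu_init (φ 0) hφ0]
  have hhT : h T = (u x T - 1) * Real.exp (m * f * T) := by
    simp only [hhdef, hgdef, hφT]
  rw [hhT, hh0] at hconst
  have hB : (0:ℝ) < Real.exp (m * f * T) := Real.exp_pos _
  have hA : (0:ℝ) < Real.exp (s * T) := Real.exp_pos _
  have hE0 : E 0 = (Real.exp (s * T))⁻¹ := by
    simp only [hEdef]
    rw [← Real.exp_neg]
    ring_nf
  have hexp_sub : Real.exp ((s - m * f) * T) = Real.exp (s * T) / Real.exp (m * f * T) := by
    rw [← Real.exp_sub]
    ring_nf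
  have hD0 : (0:ℝ) < D 0 := hDpos 0
  have hden : 1 + (1 - x) * (Real.exp (s * T) - 1) = Real.exp (s * T) * D 0 := by
    simp only [hDdef, hE0]
    field_simp
    ring
  have hux : u x T = 1 + (φ 0 - 1) / Real.exp (m * f * T) := by
    field_simp
    linarith [hconst]
  have hD0ne : D 0 ≠ 0 := (hDpos 0).ne'
  have hφ0v : φ 0 - 1 = (x - 1) / D 0 := by
    have hD0eq : D 0 = 1 - x + x * E 0 := rfl
    simp only [hφdef]
    rw [eq_div_iff hD0ne, sub_mul, div_mul_cancel₀ _ hD0ne, hD0eq]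
    ring
  rw [hux, hexp_sub, hden, hφ0v]
  field_simp
  ring
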